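/- arXiv:1609.07335 — 3 statements merged into one kernel-verified Lean document; each statement's English description precedes it below -/
import Mathlib

section
/- Let n ≥ 2 and let A and A′ be multisets of permutations in S_{n−1} such that Q(A) = Q(A′). Then Q(AC_n) = Q(A′C_n), where AC_n is the multiset {π c^k : π ∈ A, 0 ≤ k < n} counted with multiplicities. -/
open scoped Classical

noncomputable section

namespace SchurRot

/-! ### Permutations -/

/-- The value of the permutation `π ∈ S_n` (in one-line notation, with positions and
values `1,…,n`) at position `i ∈ [1,n]`. -/
def permVal {n : ℕ} (π : Equiv.Perm (Fin n)) (i : ℕ) : ℕ :=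
  if h : i - 1 < n then ((π ⟨i - 1, h⟩ : Fin n) : ℕ) + 1 else 0

/-- The descent set `Des(π) = {i ∈ [n-1] : π(i) > π(i+1)}`. -/
def DesPerm {n : ℕ} (π : Equiv.Perm (Fin n)) : Finset ℕ :=
  (Finset.Icc 1 (n - 1)).filter fun i => permVal π (i + 1) < permVal π i

/-- The cyclic descent set of `π ∈ S_n`: `Des(π)`, with `n` added iff `π(n) > π(1)`. -/
def cDesPerm {n : ℕ} (π : Equiv.Perm (Fin n)) : Finset ℕ :=
  if permVal π 1 < permVal π n then insert n (DesPerm π) else DesPerm π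

/-- `π ∈ S_n` fixes the letter `n` (so it can be viewed as an element of `S_{n-1}`). -/
def FixesTop {n : ℕ} (π : Equiv.Perm (Fin n)) : Prop :=
  ∀ i : Fin n, (i : ℕ) = n - 1 → π i = i

/-! ### Quasisymmetric and symmetric functions, in variables `x_1, x_2, …`
indexed by positive natural numbers (the variable `x_0` is unused). -/

/-- The fundamental quasisymmetric function `F_{n,D}`, as a formal power series in the
variables `x_i, i ∈ ℕ` (only variables with positive index are used): the coefficient of
a monomial `m` is the number of weakly increasing sequences `1 ≤ i_1 ≤ … ≤ i_n`, strictly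
increasing at positions in `D`, with content monomial `m`. -/
def Fqs (n : ℕ) (D : Finset ℕ) : MvPowerSeries ℕ ℤ :=
  fun m => (Set.ncard {g : Fin n → ℕ |
    (∀ p, 1 ≤ g p) ∧ Monotone g ∧
    (∀ j ∈ D, ∀ (h1 : j - 1 < n) (h2 : j < n), g ⟨j - 1, h1⟩ < g ⟨j, h2⟩) ∧
    (∑ p, Finsupp.single (g p) (1 : ℕ)) = m} : ℤ)

/-- `Q(B) = Σ_{π ∈ B} F_{m, Des(π)}` for a finite set `B` of permutations. -/
def Qset (m : ℕ) {n : ℕ} (B : Finset (Equiv.Perm (Fin n))) : MvPowerSeries ℕ ℤ :=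
  ∑ π ∈ B, Fqs m (DesPerm π)

/-- `Q(B)` for a multiset `B` of permutations, counted with multiplicity. -/
def Qmult (m : ℕ) {n : ℕ} (B : Multiset (Equiv.Perm (Fin n))) : MvPowerSeries ℕ ℤ :=
  (B.map fun π => Fqs m (DesPerm π)).sum

/-- The set `A·C_n = {π c^k : π ∈ A, 0 ≤ k < n}`, where `c = finRotate n` is the
`n`-cycle `(1,2,…,n)`. -/
def ACn {n : ℕ} (A : Finset (Equiv.Perm (Fin n))) : Finset (Equiv.Perm (Fin n)) :=
  (A ×ˢ Finset.range n).image fun p => p.1 * (finRotate n) ^ p.2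

/-- The multiset `A·C_n`, counted with multiplicities. -/
def ACmult {n : ℕ} (A : Multiset (Equiv.Perm (Fin n))) : Multiset (Equiv.Perm (Fin n)) :=
  A.bind fun π => (Multiset.range n).map fun k => π * (finRotate n) ^ k

/-- A formal power series in the variables `x_i, i ∈ ℕ` is a symmetric function if its
coefficients are invariant under every permutation of the variables. -/
def IsSymmFn (f : MvPowerSeries ℕ ℤ) : Prop :=
  ∀ (σ : Equiv.Perm ℕ) (m : ℕ →₀ ℕ),
    MvPowerSeries.coeff (Finsupp.equivMapDomain σ m) f = MvPowerSeries.coeff m f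

/-! ### Tableaux: fillings of an arbitrary finite cell set (in English notation,
cell `(i,j)` is in row `i` (increasing downwards) and column `j`). -/

/-- A semistandard filling of `cells` (entries ≥ 1, weakly increasing along rows,
strictly increasing down columns, `0` outside `cells`). -/
def IsSSYT (cells : Finset (ℕ × ℕ)) (g : ℕ × ℕ → ℕ) : Prop :=
  (∀ c, c ∉ cells → g c = 0) ∧ (∀ c ∈ cells, 1 ≤ g c) ∧
  (∀ a ∈ cells, ∀ b ∈ cells, a.1 = b.1 → a.2 ≤ b.2 → g a ≤ g b) ∧
  (∀ a ∈ cells, ∀ b ∈ cells, a.2 = b.2 → a.1 < b.1 → g a < g b)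

/-- The content monomial of a filling. -/
def contentOf (cells : Finset (ℕ × ℕ)) (g : ℕ × ℕ → ℕ) : ℕ →₀ ℕ :=
  ∑ c ∈ cells, Finsupp.single (g c) 1

/-- The (skew) Schur function of an arbitrary finite cell set: the sum, over all
semistandard fillings, of their content monomials. -/
def schurOf (cells : Finset (ℕ × ℕ)) : MvPowerSeries ℕ ℤ :=
  fun m => (Set.ncard {g : ℕ × ℕ → ℕ | IsSSYT cells g ∧ contentOf cells g = m} : ℤ)

/-- `f` is Schur-positive of degree `m`: a nonnegative integer combination of Schur
functions of partitions of `m` (encoded by a multiset of Young diagrams). -/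
def SchurPositive (m : ℕ) (f : MvPowerSeries ℕ ℤ) : Prop :=
  ∃ M : Multiset YoungDiagram, (∀ μ ∈ M, μ.cells.card = m) ∧
    f = (M.map fun μ => schurOf μ.cells).sum

/-! ### Standard fillings, rotation, reading words -/

/-- A filling of `cells` by the letters `1,…,n`, each used exactly once (and `0`
outside `cells`). -/
def IsFillingF (n : ℕ) (cells : Finset (ℕ × ℕ)) (f : ℕ × ℕ → ℕ) : Prop :=
  Set.BijOn f ↑cells (Set.Icc 1 n) ∧ ∀ c, c ∉ cells → f c = 0

/-- A filling is standard if its rows and columns increase. -/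
def IsStandardF (cells : Finset (ℕ × ℕ)) (f : ℕ × ℕ → ℕ) : Prop :=
  (∀ a ∈ cells, ∀ b ∈ cells, a.1 = b.1 → a.2 < b.2 → f a < f b) ∧
  (∀ a ∈ cells, ∀ b ∈ cells, a.2 = b.2 → a.1 < b.1 → f a < f b)

/-- Addition of `k` modulo `n` on the letters `1,…,n` (with `0` identified with `n`). -/
def rotval (n k e : ℕ) : ℕ := (e + k - 1) % n + 1

/-- Addition of an integer `k` modulo `n` on the letters `1,…,n`. -/
def rotvalZ (n : ℕ) (k : ℤ) (e : ℕ) : ℕ := (((e : ℤ) + k - 1) % (n : ℤ)).toNat + 1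

/-- Apply `φ` to every entry of a filling (keeping `0` outside `cells`);
e.g. `mapEntries cells (rotval n k) T` is the rotated tableau `k + T`. -/
def mapEntries (cells : Finset (ℕ × ℕ)) (φ : ℕ → ℕ) (f : ℕ × ℕ → ℕ) : ℕ × ℕ → ℕ :=
  fun c => if c ∈ cells then φ (f c) else 0

/-- The row containing the entry `e`. -/
def rowOf (cells : Finset (ℕ × ℕ)) (f : ℕ × ℕ → ℕ) (e : ℕ) : ℕ :=
  sInf {i | ∃ j, (i, j) ∈ cells ∧ f (i, j) = e}

/-- The cell containing the entry `e`. -/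
def cellOf (cells : Finset (ℕ × ℕ)) (f : ℕ × ℕ → ℕ) (e : ℕ) : ℕ × ℕ :=
  (rowOf cells f e,
    sInf {j | (rowOf cells f e, j) ∈ cells ∧ f (rowOf cells f e, j) = e})

/-- The cyclic descent set of a (rotated) filling of size `n`:
`{i ∈ [n] : i+1 (mod n) lies in a strictly lower row than i}`. -/
def cDesRot (n : ℕ) (cells : Finset (ℕ × ℕ)) (f : ℕ × ℕ → ℕ) : Finset ℕ :=
  (Finset.Icc 1 n).filter fun i => rowOf cells f i < rowOf cells f (rotval n 1 i)

/-- The descent set of a filling of size `n`: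
`{i ∈ [n-1] : i+1 lies in a strictly lower row than i}`. -/
def DesTab (n : ℕ) (cells : Finset (ℕ × ℕ)) (f : ℕ × ℕ → ℕ) : Finset ℕ :=
  (Finset.Icc 1 (n - 1)).filter fun i => rowOf cells f i < rowOf cells f (i + 1)

/-- `a` comes before `b` in reading order (rows left to right, bottom row first). -/
def readBefore (a b : ℕ × ℕ) : Prop :=
  b.1 < a.1 ∨ (a.1 = b.1 ∧ a.2 < b.2)

/-- The (1-indexed) position of the cell `c` in the reading order of `cells`. -/
def posInRead (cells : Finset (ℕ × ℕ)) (c : ℕ × ℕ) : ℕ :=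
  (cells.filter fun c' => readBefore c' c).card + 1

/-- The value at `e` of the inverse of the reading word of the filling `f`, i.e. the
position of the entry `e` in the reading word. -/
def invReadVal (cells : Finset (ℕ × ℕ)) (f : ℕ × ℕ → ℕ) (e : ℕ) : ℕ :=
  posInRead cells (cellOf cells f e)

/-- `A_λ` (for `cells` the diagram of `λ ⊢ m`): the set of permutations in `S_m` that are
inverse reading words of standard Young tableaux of shape `λ`. -/
def invWordSet (m : ℕ) (cells : Finset (ℕ × ℕ)) : Finset (Equiv.Perm (Fin m)) :=
  Finset.univ.filter fun π => ∃ f : ℕ × ℕ → ℕ,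
    IsFillingF m cells f ∧ IsStandardF cells f ∧
    ∀ e ∈ Finset.Icc 1 m, permVal π e = invReadVal cells f e

/-! ### The jeu-de-taquin type straightening algorithms -/

/-- The entry `i` is short: some entry immediately above it or immediately to its left
is larger. -/
def IsShort (cells : Finset (ℕ × ℕ)) (f : ℕ × ℕ → ℕ) (i : ℕ) : Prop :=
  ∃ c ∈ cells, f c = i ∧
    ((1 ≤ c.1 ∧ (c.1 - 1, c.2) ∈ cells ∧ i < f (c.1 - 1, c.2)) ∨
     (1 ≤ c.2 ∧ (c.1, c.2 - 1) ∈ cells ∧ i < f (c.1, c.2 - 1)))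

/-- The entry `i` is tall: some entry immediately below it or immediately to its right
is smaller. -/
def IsTall (cells : Finset (ℕ × ℕ)) (f : ℕ × ℕ → ℕ) (i : ℕ) : Prop :=
  ∃ c ∈ cells, f c = i ∧
    (((c.1 + 1, c.2) ∈ cells ∧ f (c.1 + 1, c.2) < i) ∨
     ((c.1, c.2 + 1) ∈ cells ∧ f (c.1, c.2 + 1) < i))

def shorts (n : ℕ) (cells : Finset (ℕ × ℕ)) (f : ℕ × ℕ → ℕ) : Finset ℕ :=
  (Finset.Icc 1 n).filter fun i => IsShort cells f i

def talls (n : ℕ) (cells : Finset (ℕ × ℕ)) (f : ℕ × ℕ → ℕ) : Finset ℕ :=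
  (Finset.Icc 1 n).filter fun i => IsTall cells f i

/-- One elementary step of `jdt`: take the minimal short entry `i` and switch it with
the larger of the entries immediately above it and immediately to its left. -/
def stepFun (n : ℕ) (cells : Finset (ℕ × ℕ)) (f : ℕ × ℕ → ℕ) : ℕ × ℕ → ℕ :=
  if h : (shorts n cells f).Nonempty then
    let i := (shorts n cells f).min' h
    let c := cellOf cells f i
    let av := if 1 ≤ c.1 ∧ (c.1 - 1, c.2) ∈ cells then f (c.1 - 1, c.2) else 0
    let lv := if 1 ≤ c.2 ∧ (c.1, c.2 - 1) ∈ cells then f (c.1, c.2 - 1) else 0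
    mapEntries cells (Equiv.swap i (max av lv)) f
  else f

/-- One elementary step of `ijdt`: take the maximal tall entry `i` and switch it with
the smaller of the entries immediately below it and immediately to its right. -/
def istepFun (n : ℕ) (cells : Finset (ℕ × ℕ)) (f : ℕ × ℕ → ℕ) : ℕ × ℕ → ℕ :=
  if h : (talls n cells f).Nonempty then
    let i := (talls n cells f).max' h
    let c := cellOf cells f i
    let bv := if (c.1 + 1, c.2) ∈ cells then f (c.1 + 1, c.2) else n + 1
    let rv := if (c.1, c.2 + 1) ∈ cells then f (c.1, c.2 + 1) else n + 1
    mapEntries cells (Equiv.swap i (min bv rv)) f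
  else f

/-- The straightening `jdt`: repeat the elementary step until the filling is standard. -/
def jdtFun (n : ℕ) (cells : Finset (ℕ × ℕ)) (f : ℕ × ℕ → ℕ) : ℕ × ℕ → ℕ :=
  if h : ∃ m, IsStandardF cells ((stepFun n cells)^[m] f) then
    (stepFun n cells)^[Nat.find h] f
  else f

/-- The straightening `ijdt`: repeat the reverse elementary step until the filling is
standard. -/
def ijdtFun (n : ℕ) (cells : Finset (ℕ × ℕ)) (f : ℕ × ℕ → ℕ) : ℕ × ℕ → ℕ :=
  if h : ∃ m, IsStandardF cells ((istepFun n cells)^[m] f) then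
    (istepFun n cells)^[Nat.find h] f
  else f

/-! ### The shape `λ^□` -/

/-- The cell of the disconnected box of `λ^□`, strictly north and strictly east of `λ`. -/
def boxCell (lam : YoungDiagram) : ℕ × ℕ := (0, lam.rowLen 0)

/-- The skew shape `λ^□`: `λ` (shifted one row down) together with one disconnected box
at its upper right corner. -/
def boxShape (lam : YoungDiagram) : Finset (ℕ × ℕ) :=
  insert (boxCell lam) (lam.cells.image fun c => (c.1 + 1, c.2))

/-- `δ(P)`: the entry of the disconnected box of a filling of `λ^□`. -/
def deltaOf (lam : YoungDiagram) (f : ℕ × ℕ → ℕ) : ℕ := f (boxCell lam)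

/-- The inverse of `jdt` on `SYT(λ^□)`: `jdt⁻¹(P) = δ(P) + ijdt(-δ(P) + P)`. -/
def jdtInvFun (n : ℕ) (lam : YoungDiagram) (P : ℕ × ℕ → ℕ) : ℕ × ℕ → ℕ :=
  mapEntries (boxShape lam) (rotval n (deltaOf lam P))
    (ijdtFun n (boxShape lam)
      (mapEntries (boxShape lam) (rotval n (n - deltaOf lam P)) P))

/-- The cyclic descent set of `P ∈ SYT(λ^□)`: `cDes(P) = cDes_rot(jdt⁻¹(P))`. -/
def cDesBox (n : ℕ) (lam : YoungDiagram) (P : ℕ × ℕ → ℕ) : Finset ℕ :=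
  cDesRot n (boxShape lam) (jdtInvFun n lam P)

/-- The restriction of `f` to the entries in `S` is standard: there are no two entries
in `S` in which the smaller one lies weakly south and weakly east of the larger one. -/
def RestrictedStd (cells : Finset (ℕ × ℕ)) (f : ℕ × ℕ → ℕ) (S : Finset ℕ) : Prop :=
  ∀ a ∈ cells, ∀ b ∈ cells, f a ∈ S → f b ∈ S →
    a.1 ≤ b.1 → a.2 ≤ b.2 → a ≠ b → f a < f b

end SchurRot


noncomputable section
namespace SchurRot



/-! ### Auxiliary lemmas for Statement 7 -/

private lemma aux_toFinsupp_map_eq_sum {ι : Type*} (s : Multiset ι) (f : ι → ℕ) :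
    (s.map f).toFinsupp = (s.map fun i => Finsupp.single (f i) (1 : ℕ)).sum := by
  induction s using Multiset.induction_on with
  | empty => simp
  | cons a s ih =>
    rw [Multiset.map_cons, Multiset.map_cons, Multiset.sum_cons, ← Multiset.singleton_add,
      map_add, Multiset.toFinsupp_singleton, ih]

private lemma aux_monotone_eq_of_content {m : ℕ} {g g' : Fin m → ℕ} (hg : Monotone g)
    (hg' : Monotone g')
    (h : (∑ p, Finsupp.single (g p) (1 : ℕ)) = ∑ p, Finsupp.single (g' p) 1) : g = g' := by
  have hs : Multiset.map g Finset.univ.val = Multiset.map g' Finset.univ.val := by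
    apply Multiset.toFinsupp.injective
    rw [aux_toFinsupp_map_eq_sum, aux_toFinsupp_map_eq_sum]
    simpa [Finset.sum] using h
  rw [Fin.univ_val_map, Fin.univ_val_map] at hs
  have hperm : (List.ofFn g).Perm (List.ofFn g') := Quotient.exact hs
  exact List.ofFn_injective (List.Perm.eq_of_sortedLE
    (List.sortedLE_ofFn_iff.2 hg) (List.sortedLE_ofFn_iff.2 hg') hperm)

/-- The generic weakly increasing word with strict increases exactly at `E`. -/
def gE (E : Finset ℕ) (p : ℕ) : ℕ := 1 + (E ∩ Finset.Icc 1 p).card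

lemma gE_mono (E : Finset ℕ) : Monotone (gE E) := fun _ _ hpq =>
  Nat.add_le_add_left (Finset.card_le_card
    (Finset.inter_subset_inter le_rfl (Finset.Icc_subset_Icc le_rfl hpq))) 1

lemma gE_step (E : Finset ℕ) (j : ℕ) (hj : 1 ≤ j) :
    gE E j = gE E (j - 1) + (if j ∈ E then 1 else 0) := by
  have hIcc : Finset.Icc 1 j = insert j (Finset.Icc 1 (j - 1)) := by
    ext x; simp only [Finset.mem_Icc, Finset.mem_insert]; omega
  unfold gE
  rw [hIcc, Finset.inter_comm]
  by_cases hjE : j ∈ E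
  · rw [Finset.insert_inter_of_mem hjE, Finset.card_insert_of_notMem, if_pos hjE,
      Finset.inter_comm]
    · omega
    · intro hmem
      have h1 := (Finset.mem_Icc.1 (Finset.mem_inter.1 hmem).1)
      omega
  · rw [Finset.insert_inter_of_notMem hjE, if_neg hjE, Finset.inter_comm]; omega

def gF (m : ℕ) (E : Finset ℕ) : Fin m → ℕ := fun p => gE E (p : ℕ)

/-- The content monomial of the word `gF m E`. -/
def muE (m : ℕ) (E : Finset ℕ) : ℕ →₀ ℕ := ∑ p : Fin m, Finsupp.single (gF m E p) 1

lemma gF_mono (m : ℕ) (E : Finset ℕ) : Monotone (gF m E) := fun _ _ h => gE_mono E h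

/-- Triangularity: the coefficient of `F_{m,D}` at the monomial `μ_E`. -/
lemma Fqs_muE (m : ℕ) (D E : Finset ℕ) (hD : D ⊆ Finset.Icc 1 (m - 1)) :
    Fqs m D (muE m E) = if D ⊆ E then 1 else 0 := by
  have huniq : ∀ g : Fin m → ℕ,
      ((∀ p, 1 ≤ g p) ∧ Monotone g ∧
        (∀ j ∈ D, ∀ (h1 : j - 1 < m) (h2 : j < m), g ⟨j - 1, h1⟩ < g ⟨j, h2⟩) ∧
        (∑ p, Finsupp.single (g p) (1 : ℕ)) = muE m E) → g = gF m E := by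
    intro g hg
    exact aux_monotone_eq_of_content hg.2.1 (gF_mono m E) hg.2.2.2
  by_cases hDE : D ⊆ E
  · rw [if_pos hDE]
    have hset : {g : Fin m → ℕ |
        (∀ p, 1 ≤ g p) ∧ Monotone g ∧
        (∀ j ∈ D, ∀ (h1 : j - 1 < m) (h2 : j < m), g ⟨j - 1, h1⟩ < g ⟨j, h2⟩) ∧
        (∑ p, Finsupp.single (g p) (1 : ℕ)) = muE m E} = {gF m E} := by
      ext g
      simp only [Set.mem_setOf_eq, Set.mem_singleton_iff]
      constructor
      · intro hg; exact huniq g hg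
      · rintro rfl
        refine ⟨fun p => Nat.le_add_right 1 _, gF_mono m E, ?_, rfl⟩
        intro j hj h1 h2
        have hjIcc := Finset.mem_Icc.1 (hD hj)
        show gE E (j - 1) < gE E j
        rw [gE_step E j hjIcc.1, if_pos (hDE hj)]
        omega
    show ((Set.ncard _ : ℕ) : ℤ) = 1
    rw [hset, Set.ncard_singleton]
    norm_num
  · rw [if_neg hDE]
    obtain ⟨j, hjD, hjE⟩ := Finset.not_subset.1 hDE
    have hjIcc := Finset.mem_Icc.1 (hD hjD)
    have hset : {g : Fin m → ℕ |
        (∀ p, 1 ≤ g p) ∧ Monotone g ∧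
        (∀ j ∈ D, ∀ (h1 : j - 1 < m) (h2 : j < m), g ⟨j - 1, h1⟩ < g ⟨j, h2⟩) ∧
        (∑ p, Finsupp.single (g p) (1 : ℕ)) = muE m E} = ∅ := by
      ext g
      simp only [Set.mem_setOf_eq, Set.mem_empty_iff_false, iff_false]
      intro hg
      have hgf := huniq g hg
      subst hgf
      have h1 : j - 1 < m := by omega
      have h2 : j < m := by omega
      have hlt := hg.2.2.1 j hjD h1 h2
      have hstep := gE_step E j hjIcc.1
      rw [if_neg hjE] at hstep
      have : gE E (j - 1) < gE E j := hlt
      omega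
    show ((Set.ncard _ : ℕ) : ℤ) = 0
    rw [hset, Set.ncard_empty]
    norm_num

lemma sum_map_ite (S : Multiset (Finset ℕ)) (E : Finset ℕ) :
    (S.map fun D => if D ⊆ E then (1 : ℤ) else 0).sum
      = ((S.filter fun D => D ⊆ E).card : ℤ) := by
  induction S using Multiset.induction_on with
  | empty => simp
  | cons a S ih =>
    rw [Multiset.map_cons, Multiset.sum_cons, Multiset.filter_cons, ih]
    by_cases h : a ⊆ E <;> simp [h] <;> ring

lemma card_filter_subset_eq (S : Multiset (Finset ℕ)) (E : Finset ℕ) :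
    (S.filter fun D => D ⊆ E).card = ∑ F ∈ E.powerset, S.count F := by
  induction S using Multiset.induction_on with
  | empty => simp
  | cons a S ih =>
    rw [Multiset.filter_cons]
    simp only [Multiset.card_add, ih, Multiset.count_cons]
    rw [Finset.sum_add_distrib]
    have hsum : (∑ F ∈ E.powerset, if F = a then 1 else 0) = if a ⊆ E then 1 else 0 := by
      rw [Finset.sum_ite_eq' E.powerset a fun _ => 1]
      simp [Finset.mem_powerset]
    rw [hsum]
    by_cases h : a ⊆ E <;> simp [h] <;> omega

/-- Zeta-transform injectivity: multisets of finsets with the same number of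
elements below every finset are equal. -/
lemma counts_eq (S S' : Multiset (Finset ℕ))
    (h : ∀ E : Finset ℕ, (S.filter fun D => D ⊆ E).card = (S'.filter fun D => D ⊆ E).card) :
    S = S' := by
  ext E
  induction E using Finset.strongInduction with
  | _ E ih =>
    have h1 := h E
    rw [card_filter_subset_eq, card_filter_subset_eq,
      ← Finset.add_sum_erase _ _ (Finset.mem_powerset_self E),
      ← Finset.add_sum_erase _ _ (Finset.mem_powerset_self E)] at h1
    have h2 : ∀ F ∈ E.powerset.erase E, S.count F = S'.count F := by
      intro F hF
      have hne := (Finset.mem_erase.1 hF).1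
      have hsub := Finset.mem_powerset.1 (Finset.mem_erase.1 hF).2
      exact ih F (Finset.ssubset_iff_subset_ne.2 ⟨hsub, hne⟩)
    rw [Finset.sum_congr rfl h2] at h1
    omega

/-- The rotated descent set: `Des(π c^k)` as a function of `cDes(π) = Des(π) ∪ {n}`. -/
def rotDes (n k : ℕ) (D : Finset ℕ) : Finset ℕ :=
  (Finset.Icc 1 (n - 1)).filter fun i => rotval n k i ∈ insert n D

lemma permVal_eq {n : ℕ} (σ : Equiv.Perm (Fin n)) (j : ℕ) (hj : j < n) :
    permVal σ (j + 1) = (σ ⟨j, hj⟩ : ℕ) + 1 := by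
  unfold permVal
  rw [dif_pos (show j + 1 - 1 < n from hj)]
  exact rfl

open Fin.NatCast in
lemma finRotate_pow_apply (N k : ℕ) : ∀ x : Fin (N + 1),
    ((finRotate (N + 1)) ^ k) x = x + (k : Fin (N + 1)) := by
  induction k with
  | zero => intro x; simp
  | succ k ih =>
    intro x
    rw [pow_succ, Equiv.Perm.mul_apply, finRotate_succ_apply, ih (x + 1)]
    push_cast
    abel

lemma desPerm_subset {n : ℕ} (hn : 2 ≤ n) (π : Equiv.Perm (Fin n)) (hπ : FixesTop π) :
    DesPerm π ⊆ Finset.Icc 1 (n - 2) := by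
  intro i hi
  rw [DesPerm, Finset.mem_filter, Finset.mem_Icc] at hi
  obtain ⟨⟨hi1, hi2⟩, hlt⟩ := hi
  rw [Finset.mem_Icc]
  refine ⟨hi1, ?_⟩
  by_contra hcon
  have hieq : i = n - 1 := by omega
  subst hieq
  have hn1 : n - 1 < n := by omega
  have htop : π ⟨n - 1, hn1⟩ = ⟨n - 1, hn1⟩ := hπ _ rfl
  rw [permVal_eq π (n - 1) hn1, htop] at hlt
  have hn2 : n - 1 - 1 < n := by omega
  have hle : (π ⟨n - 1 - 1, hn2⟩ : ℕ) < n := (π _).isLt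
  have heq : permVal π (n - 1) = (π ⟨n - 1 - 1, hn2⟩ : ℕ) + 1 := by
    unfold permVal
    rw [dif_pos hn2]
  rw [heq] at hlt
  have hne : π ⟨n - 1 - 1, hn2⟩ ≠ ⟨n - 1, hn1⟩ := by
    intro hcon2
    have h3 := π.injective (hcon2.trans htop.symm)
    have h4 := congrArg Fin.val h3
    simp only [] at h4
    omega
  have h5 : (π ⟨n - 1 - 1, hn2⟩ : ℕ) ≠ n - 1 := fun hc => hne (Fin.ext hc)
  simp only [] at hlt
  omega

open Fin.NatCast in
/-- Key computation: the descent set of `π c^k` for `π` fixing the top letter. -/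
lemma DesPerm_mul_pow {n : ℕ} (hn : 2 ≤ n) (π : Equiv.Perm (Fin n)) (hπ : FixesTop π)
    (k : ℕ) : DesPerm (π * (finRotate n) ^ k) = rotDes n k (DesPerm π) := by
  obtain ⟨N, rfl⟩ : ∃ N, n = N + 1 := ⟨n - 1, by omega⟩
  have hN : 1 ≤ N := by omega
  ext i
  rw [DesPerm, rotDes, Finset.mem_filter, Finset.mem_filter]
  refine and_congr_right fun hi => ?_
  rw [Finset.mem_Icc] at hi
  obtain ⟨hi1, hi2⟩ := hi
  have hi1' : i - 1 < N + 1 := by omega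
  have hi' : i < N + 1 := by omega
  set k' : Fin (N + 1) := (k : Fin (N + 1)) with hk'
  set a : Fin (N + 1) := ⟨i - 1, hi1'⟩ + k' with ha
  have hone : ((1 : Fin (N + 1)) : ℕ) = 1 := by
    rw [Fin.val_one']
    exact Nat.mod_eq_of_lt (by omega)
  have hstep : (⟨i, hi'⟩ : Fin (N + 1)) = ⟨i - 1, hi1'⟩ + 1 := by
    apply Fin.ext
    rw [Fin.val_add, hone]
    show i = (i - 1 + 1) % (N + 1)
    rw [Nat.mod_eq_of_lt (by omega)]
    omega
  have hL : permVal (π * (finRotate (N + 1)) ^ k) i = (π a : ℕ) + 1 := by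
    conv_lhs => rw [show i = (i - 1) + 1 by omega]
    rw [permVal_eq _ (i - 1) hi1', Equiv.Perm.mul_apply, finRotate_pow_apply]
  have hR : permVal (π * (finRotate (N + 1)) ^ k) (i + 1) = (π (a + 1) : ℕ) + 1 := by
    rw [permVal_eq _ i hi', Equiv.Perm.mul_apply, finRotate_pow_apply, hstep]
    congr 2
    rw [ha]
    exact congrArg π (add_right_comm (⟨i - 1, hi1'⟩ : Fin (N + 1)) 1 k')
  have hval : (a : ℕ) = (i - 1 + k) % (N + 1) := by
    rw [ha, Fin.val_add, hk', Fin.val_natCast]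
    exact Nat.add_mod_mod (i - 1) k (N + 1)
  have hrot : rotval (N + 1) k i = (a : ℕ) + 1 := by
    rw [rotval, hval, show i + k - 1 = i - 1 + k by omega]
  rw [hL, hR, hrot]
  rw [Nat.add_lt_add_iff_right]
  by_cases hlast : (a : ℕ) = N
  · have hfix : π a = a := hπ a hlast
    have ha1 : a + 1 = 0 := by
      apply Fin.ext
      rw [Fin.val_add, hone, hlast]
      simp
    constructor
    · intro _
      rw [hlast]
      exact Finset.mem_insert_self _ _
    · intro _
      rw [ha1, hfix]
      have hne : π 0 ≠ a := by
        intro hcon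
        have h3 := π.injective (hcon.trans hfix.symm)
        have hv := congrArg Fin.val h3
        rw [Fin.val_zero] at hv
        omega
      have h1 : (π 0 : ℕ) ≤ N := by
        have := (π 0).isLt
        omega
      have h2 : (π 0 : ℕ) ≠ N := by
        intro hc
        exact hne (Fin.ext (hc.trans hlast.symm))
      show (π 0 : ℕ) < (a : ℕ)
      omega
  · have haN : (a : ℕ) < N := by
      have := a.isLt
      omega
    have ha1v : ((a + 1 : Fin (N + 1)) : ℕ) = (a : ℕ) + 1 := by
      rw [Fin.val_add, hone]
      exact Nat.mod_eq_of_lt (by omega)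
    have hmem : (a : ℕ) + 1 ∈ insert (N + 1) (DesPerm π) ↔ (a : ℕ) + 1 ∈ DesPerm π := by
      rw [Finset.mem_insert]
      constructor
      · rintro (hc | h)
        · omega
        · exact h
      · exact Or.inr
    rw [hmem, DesPerm, Finset.mem_filter, Finset.mem_Icc]
    have hIcc : (1 ≤ (a : ℕ) + 1 ∧ (a : ℕ) + 1 ≤ N + 1 - 1) := by omega
    have hpv1 : permVal π ((a : ℕ) + 1) = (π a : ℕ) + 1 := by
      rw [permVal_eq π (a : ℕ) a.isLt]
    have hlt2 : (a : ℕ) + 1 < N + 1 := by omega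
    have hpv2 : permVal π ((a : ℕ) + 1 + 1) = (π (a + 1) : ℕ) + 1 := by
      rw [permVal_eq π ((a : ℕ) + 1) hlt2]
      have he : (⟨(a : ℕ) + 1, hlt2⟩ : Fin (N + 1)) = a + 1 := Fin.ext ha1v.symm
      rw [he]
    rw [hpv1, hpv2]
    constructor
    · intro h
      exact ⟨hIcc, by omega⟩
    · intro h
      have := h.2
      omega

/-- Expansion of `Q(A C_n)` through descent sets only. -/
lemma Qmult_ACmult_eq {n : ℕ} (hn : 2 ≤ n) (A : Multiset (Equiv.Perm (Fin n)))
    (hA : ∀ π ∈ A, FixesTop π) :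
    Qmult n (ACmult A) =
      ((A.map DesPerm).map fun D =>
        ((Multiset.range n).map fun k => Fqs n (rotDes n k D)).sum).sum := by
  rw [Qmult, ACmult, Multiset.map_bind, Multiset.sum_bind, Multiset.map_map]
  apply congrArg Multiset.sum
  apply Multiset.map_congr rfl
  intro π hπ
  simp only [Function.comp]
  rw [Multiset.map_map]
  apply congrArg Multiset.sum
  apply Multiset.map_congr rfl
  intro k _
  simp only [Function.comp]
  rw [DesPerm_mul_pow hn π (hA π hπ) k]

/-- Lemma 4.1. If `A` and `A'` are multisets of permutations in
`S_{n-1}` (realized inside `S_n` as permutations fixing the letter `n`) with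
`Q(A) = Q(A')`, then `Q(A C_n) = Q(A' C_n)`. -/
theorem Qmult_ACn_congr (n : ℕ) (hn : 2 ≤ n) (A A' : Multiset (Equiv.Perm (Fin n)))
    (hA : ∀ π ∈ A, FixesTop π) (hA' : ∀ π ∈ A', FixesTop π)
    (hQ : Qmult (n - 1) A = Qmult (n - 1) A') :
    Qmult n (ACmult A) = Qmult n (ACmult A') := by
  have hS : A.map DesPerm = A'.map DesPerm := by
    apply counts_eq
    intro E
    have key : ∀ (B : Multiset (Equiv.Perm (Fin n))), (∀ π ∈ B, FixesTop π) →
        MvPowerSeries.coeff (muE (n - 1) E) (Qmult (n - 1) B)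
          = (((B.map DesPerm).filter fun D => D ⊆ E).card : ℤ) := by
      intro B hB
      rw [Qmult, map_multiset_sum, Multiset.map_map]
      have hcong : ∀ π ∈ B,
          ((MvPowerSeries.coeff (muE (n - 1) E)) ∘ fun π => Fqs (n - 1) (DesPerm π)) π
            = ((fun D => if D ⊆ E then (1 : ℤ) else 0) ∘ DesPerm) π := by
        intro π hπ
        simp only [Function.comp]
        rw [MvPowerSeries.coeff_apply]
        apply Fqs_muE
        have h1 := desPerm_subset hn π (hB π hπ)
        rwa [show n - 2 = n - 1 - 1 by omega] at h1
      rw [Multiset.map_congr rfl hcong, ← Multiset.map_map, sum_map_ite]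
    have h1 := key A hA
    have h2 := key A' hA'
    rw [hQ, h2] at h1
    exact_mod_cast h1.symm
  rw [Qmult_ACmult_eq hn A hA, Qmult_ACmult_eq hn A' hA', hS]

end SchurRot
end
end
end

section
/- Let n ≥ 2, let σ ∈ S_n satisfy σ(n) = n, and let 1 ≤ k ≤ n−1. Then Des(σ c^{−k}) = ({(d+k) mod n : d ∈ Des(σ)} ∩ [n−1]) ∪ {k}, where c is the n-cycle (1,2,…,n). -/
open scoped Classical

noncomputable section

noncomputable section
namespace SchurRot

open Fin.NatCast

lemma finRotate_pow_apply_aux (m k : ℕ) (j : Fin (m + 1)) :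
    ((finRotate (m + 1)) ^ k) j = j + (k : Fin (m + 1)) := by
  induction k with
  | zero => simp
  | succ k ih =>
    rw [pow_succ', Equiv.Perm.mul_apply, ih, finRotate_succ_apply]
    push_cast
    abel

lemma tau_apply_aux (m k : ℕ) (σ : Equiv.Perm (Fin (m + 1))) (j : Fin (m + 1)) :
    (σ * ((finRotate (m + 1))⁻¹) ^ k) j = σ (j - (k : Fin (m + 1))) := by
  rw [Equiv.Perm.mul_apply, inv_pow]
  congr 1
  rw [Equiv.Perm.inv_def, Equiv.symm_apply_eq, finRotate_pow_apply_aux, sub_add_cancel]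

lemma mem_DesPerm_aux {n : ℕ} (π : Equiv.Perm (Fin n)) (i : ℕ) (h1 : 1 ≤ i)
    (h2 : i ≤ n - 1) (h3 : 1 ≤ n) :
    i ∈ DesPerm π ↔ (π ⟨i, by omega⟩ : ℕ) < π ⟨i - 1, by omega⟩ := by
  simp only [DesPerm, Finset.mem_filter, Finset.mem_Icc]
  rw [permVal, permVal, dif_pos (show i + 1 - 1 < n by omega),
    dif_pos (show i - 1 < n by omega)]
  simp only [Nat.add_lt_add_iff_right]
  constructor
  · rintro ⟨-, h⟩; exact h
  · intro h; exact ⟨⟨h1, h2⟩, h⟩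

/-- Let `σ ∈ S_n` with `σ(n) = n` and `1 ≤ k ≤ n-1`. Then
`Des(σ c^{-k}) = ({(d+k) mod n : d ∈ Des(σ)} ∩ [n-1]) ∪ {k}`. -/
theorem Des_rotation (n : ℕ) (hn : 2 ≤ n) (σ : Equiv.Perm (Fin n)) (hσ : FixesTop σ)
    (k : ℕ) (hk1 : 1 ≤ k) (hk2 : k ≤ n - 1) :
    DesPerm (σ * ((finRotate n)⁻¹) ^ k) =
      ((DesPerm σ).image fun d => (d + k) % n) ∩ Finset.Icc 1 (n - 1) ∪ {k} := by
  obtain ⟨m, rfl⟩ : ∃ m, n = m + 2 := ⟨n - 2, by omega⟩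
  have hkn : k < m + 2 := by omega
  set τ := σ * ((finRotate (m + 2))⁻¹) ^ k with hτ
  have hσtop : σ ⟨m + 1, by omega⟩ = ⟨m + 1, by omega⟩ := hσ _ (by simp)
  have hval : ∀ a (ha : a < m + 2) b (hb : b < m + 2), (m + 2 - k + a) % (m + 2) = b →
      (τ ⟨a, ha⟩ : ℕ) = σ ⟨b, hb⟩ := by
    intro a ha b hb hab
    rw [hτ, tau_apply_aux]
    have harg : (⟨a, ha⟩ : Fin (m + 2)) - (k : Fin (m + 2)) = ⟨b, hb⟩ := by
      rw [Fin.sub_def]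
      apply Fin.ext
      simpa [Fin.val_cast_of_lt hkn] using hab
    rw [harg]
  -- mod facts helper
  have hmod2 : ∀ d, d < m + 2 → (m + 2 + d) % (m + 2) = d := by
    intro d hd
    rw [Nat.add_mod_left, Nat.mod_eq_of_lt hd]
  ext i
  simp only [Finset.mem_union, Finset.mem_inter, Finset.mem_image, Finset.mem_Icc,
    Finset.mem_singleton]
  by_cases hi : 1 ≤ i ∧ i ≤ m + 1
  · by_cases hik : i = k
    · subst hik
      constructor
      · intro _; exact Or.inr rfl
      · intro _
        rw [mem_DesPerm_aux τ i hk1 (by omega) (by omega),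
          hval i (by omega) 0 (by omega) (by rw [show m + 2 - i + i = m + 2 by omega]; simp),
          hval (i - 1) (by omega) (m + 1) (by omega)
            (by rw [Nat.mod_eq_of_lt (by omega)]; omega)]
        have hne : σ ⟨0, by omega⟩ ≠ ⟨m + 1, by omega⟩ := by
          rw [← hσtop]
          intro h
          have := σ.injective h
          simp only [Fin.mk.injEq] at this
          omega
        have hle : (σ ⟨0, by omega⟩ : ℕ) < m + 2 := (σ ⟨0, by omega⟩).2
        have : (σ ⟨0, by omega⟩ : ℕ) ≠ m + 1 := fun h => hne (Fin.ext h)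
        rw [show ((σ ⟨m + 1, by omega⟩ : Fin (m + 2)) : ℕ) = m + 1 from by rw [hσtop]]
        omega
    · -- i ≠ k
      obtain ⟨d₀, hd01, hd02, e1, e2, e3⟩ :
          ∃ d₀, 1 ≤ d₀ ∧ d₀ ≤ m + 1 ∧ (m + 2 - k + i) % (m + 2) = d₀ ∧
            (m + 2 - k + (i - 1)) % (m + 2) = d₀ - 1 ∧ (d₀ + k) % (m + 2) = i := by
        rcases Nat.lt_or_ge i k with h | h
        · refine ⟨i + (m + 2) - k, by omega, by omega, ?_, ?_, ?_⟩
          · rw [Nat.mod_eq_of_lt (by omega)]; omega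
          · rw [Nat.mod_eq_of_lt (by omega)]; omega
          · rw [show i + (m + 2) - k + k = m + 2 + i by omega, hmod2 i (by omega)]
        · refine ⟨i - k, by omega, by omega, ?_, ?_, ?_⟩
          · rw [show m + 2 - k + i = m + 2 + (i - k) by omega, hmod2 _ (by omega)]
          · rw [show m + 2 - k + (i - 1) = m + 2 + (i - 1 - k) by omega,
              hmod2 _ (by omega)]
            omega
          · rw [Nat.mod_eq_of_lt (by omega)]; omega
      have huniq : ∀ d, 1 ≤ d → d ≤ m + 1 → (d + k) % (m + 2) = i → d = d₀ := by
        intro d hd1 hd2 hd3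
        rcases Nat.lt_or_ge (d + k) (m + 2) with h | h
        · rw [Nat.mod_eq_of_lt h] at hd3
          rcases Nat.lt_or_ge (d₀ + k) (m + 2) with h' | h'
          · rw [Nat.mod_eq_of_lt h'] at e3; omega
          · rw [show d₀ + k = m + 2 + (d₀ + k - (m + 2)) by omega,
              hmod2 _ (by omega)] at e3; omega
        · rw [show d + k = m + 2 + (d + k - (m + 2)) by omega,
            hmod2 _ (by omega)] at hd3
          rcases Nat.lt_or_ge (d₀ + k) (m + 2) with h' | h'
          · rw [Nat.mod_eq_of_lt h'] at e3; omega
          · rw [show d₀ + k = m + 2 + (d₀ + k - (m + 2)) by omega,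
              hmod2 _ (by omega)] at e3; omega
      rw [mem_DesPerm_aux τ i hi.1 (by omega) (by omega),
        hval i (by omega) d₀ (by omega) e1,
        hval (i - 1) (by omega) (d₀ - 1) (by omega) e2,
        ← mem_DesPerm_aux σ d₀ hd01 (by omega) (by omega)]
      constructor
      · intro h
        exact Or.inl ⟨⟨d₀, h, e3⟩, by omega, by omega⟩
      · rintro (⟨⟨d, hd, hdi⟩, -⟩ | h)
        · have hd' := hd
          simp only [DesPerm, Finset.mem_filter, Finset.mem_Icc] at hd'
          rwa [huniq d hd'.1.1 (by omega) hdi] at hd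
        · exact absurd h hik
  · constructor
    · intro h
      simp only [DesPerm, Finset.mem_filter, Finset.mem_Icc] at h
      omega
    · rintro (⟨-, h⟩ | h) <;> omega

end SchurRot
end
end
end

section
/- Let λ ⊢ n−1, let 1 ≤ k < n, and let T ∈ SYT(λ^□) with δ(T) = n; call the entries 1,2,…,k−1 moving and the entries k+1,…,n non-moving. Let Q be any tableau obtained at an intermediate step of the jdt straightening process applied to k+T. Then Q contains no two moving entries in which the smaller one lies weakly south and weakly east of the larger one (i.e. Q restricted to the moving entries is standard), and likewise for the non-moving entries; moreover, every elementary step performed by jdt in this process swaps one moving entry with one non-moving entry. -/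
open scoped Classical

noncomputable section

noncomputable section
namespace SchurRot


/-- Shifted-diagram cell predicate. -/
def ShC (lam : YoungDiagram) (c : ℕ × ℕ) : Prop := 1 ≤ c.1 ∧ (c.1 - 1, c.2) ∈ lam

lemma mem_boxShape {lam : YoungDiagram} {c : ℕ × ℕ} :
    c ∈ boxShape lam ↔ c = boxCell lam ∨ ShC lam c := by
  obtain ⟨r, s⟩ := c
  unfold boxShape ShC
  simp only [Finset.mem_insert, Finset.mem_image, YoungDiagram.mem_cells]
  constructor
  · rintro (h | ⟨⟨r', s'⟩, hm, he⟩)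
    · exact Or.inl h
    · injection he with he1 he2
      subst he2
      have he1' : r' + 1 = r := he1
      refine Or.inr ⟨by omega, ?_⟩
      show (r - 1, s') ∈ lam
      rw [show r - 1 = r' from by omega]
      exact hm
  · rintro (h | ⟨h1, h2⟩)
    · exact Or.inl h
    · exact Or.inr ⟨(r - 1, s), h2, by simp; omega⟩

lemma shC_mem {lam : YoungDiagram} {c : ℕ × ℕ} (h : ShC lam c) : c ∈ boxShape lam :=
  mem_boxShape.2 (Or.inr h)

lemma shC_ne_box {lam : YoungDiagram} {c : ℕ × ℕ} (h : ShC lam c) : c ≠ boxCell lam := by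
  intro he
  have h0 : c.1 = 0 := by rw [he]; rfl
  have h1 := h.1
  omega

lemma mem_shC {lam : YoungDiagram} {c : ℕ × ℕ} (h : c ∈ boxShape lam)
    (hne : c ≠ boxCell lam) : ShC lam c := (mem_boxShape.1 h).resolve_left hne

lemma shC_col_lt {lam : YoungDiagram} {c : ℕ × ℕ} (h : ShC lam c) : c.2 < lam.rowLen 0 :=
  lt_of_lt_of_le (YoungDiagram.mem_iff_lt_rowLen.1 h.2) (lam.rowLen_anti 0 (c.1 - 1) (Nat.zero_le _))

lemma shC_up {lam : YoungDiagram} {c : ℕ × ℕ} (h : ShC lam c) (h2 : 2 ≤ c.1) :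
    ShC lam (c.1 - 1, c.2) :=
  ⟨by omega, by
    have := lam.up_left_mem (show c.1 - 1 - 1 ≤ c.1 - 1 by omega) le_rfl h.2
    exact this⟩

lemma shC_left {lam : YoungDiagram} {c : ℕ × ℕ} (h : ShC lam c) (h1 : 1 ≤ c.2) :
    ShC lam (c.1, c.2 - 1) :=
  ⟨h.1, lam.up_left_mem le_rfl (show c.2 - 1 ≤ c.2 by omega) h.2⟩

lemma boxCell_mem {lam : YoungDiagram} : boxCell lam ∈ boxShape lam :=
  Finset.mem_insert_self _ _


section Aux

lemma cellOf_eq {cells : Finset (ℕ × ℕ)} {f : ℕ × ℕ → ℕ} (hinj : Set.InjOn f ↑cells)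
    {c : ℕ × ℕ} (hc : c ∈ cells) : cellOf cells f (f c) = c := by
  have hrow : rowOf cells f (f c) = c.1 := by
    unfold rowOf
    have hset : {i | ∃ j, (i, j) ∈ cells ∧ f (i, j) = f c} = {c.1} := by
      ext i
      simp only [Set.mem_setOf_eq, Set.mem_singleton_iff]
      constructor
      · rintro ⟨j, hm, he⟩
        have : (i, j) = c := hinj hm hc he
        rw [← this]
      · rintro rfl
        exact ⟨c.2, by rwa [Prod.mk.eta], by rw [Prod.mk.eta]⟩
    rw [hset, csInf_singleton]
  unfold cellOf
  rw [hrow]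
  have hset2 : {j | (c.1, j) ∈ cells ∧ f (c.1, j) = f c} = {c.2} := by
    ext j
    simp only [Set.mem_setOf_eq, Set.mem_singleton_iff]
    constructor
    · rintro ⟨hm, he⟩
      exact congrArg Prod.snd (hinj hm hc he)
    · rintro rfl
      exact ⟨by rwa [Prod.mk.eta], by rw [Prod.mk.eta]⟩
  rw [hset2, csInf_singleton, Prod.mk.eta]

lemma std_no_short {cells : Finset (ℕ × ℕ)} {f : ℕ × ℕ → ℕ}
    (hstd : IsStandardF cells f) (e : ℕ) : ¬ IsShort cells f e := by
  rintro ⟨c, hc, hval, ⟨h1, h2, h3⟩ | ⟨h1, h2, h3⟩⟩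
  · have := hstd.2 (c.1 - 1, c.2) h2 c hc rfl (by omega)
    omega
  · have := hstd.1 (c.1, c.2 - 1) h2 c hc rfl (by omega)
    omega

/-- Key "north-west" comparison lemma: if no entry `≤ f b` is short, then the entry at
any cell weakly north-west of `b` is smaller than `f b`. -/
lemma nw_lt {lam : YoungDiagram} {f : ℕ × ℕ → ℕ} (hinj : Set.InjOn f ↑(boxShape lam)) :
    ∀ (N : ℕ) (a b : ℕ × ℕ), a ∈ boxShape lam → b ∈ boxShape lam → b.1 + b.2 ≤ N →
      a.1 ≤ b.1 → a.2 ≤ b.2 → a ≠ b →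
      (∀ e, e ≤ f b → ¬ IsShort (boxShape lam) f e) → f a < f b := by
  intro N
  induction N with
  | zero =>
    intro a b ha hb hN h1 h2 hne _
    exact absurd (Prod.ext_iff.2 ⟨by omega, by omega⟩) hne
  | succ N ih =>
    intro a b ha hb hN h1 h2 hne hns
    have hbne : b ≠ boxCell lam := by
      rintro rfl
      rcases mem_boxShape.1 ha with h | h
      · exact hne h
      · have h1' := h.1
        have : (boxCell lam).1 = 0 := rfl
        omega
    have hb' : ShC lam b := mem_shC hb hbne
    have hane : a ≠ boxCell lam := by
      rintro rfl
      have hcol := shC_col_lt hb'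
      have : (boxCell lam).2 = lam.rowLen 0 := rfl
      omega
    have ha' : ShC lam a := mem_shC ha hane
    rcases Nat.lt_or_ge a.1 b.1 with hrow | hrow
    · -- go up from b
      have hb2 : 2 ≤ b.1 := by have := ha'.1; omega
      have hbu : ShC lam (b.1 - 1, b.2) := shC_up hb' hb2
      have hmem : (b.1 - 1, b.2) ∈ boxShape lam := shC_mem hbu
      have hne2 : (b.1 - 1, b.2) ≠ b := by
        intro h
        have := congrArg Prod.fst h
        simp only at this
        omega
      have hlt : f (b.1 - 1, b.2) < f b := by
        by_contra hge
        push_neg at hge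
        have hneq : f (b.1 - 1, b.2) ≠ f b := fun h => hne2 (hinj hmem hb h)
        exact hns (f b) le_rfl ⟨b, hb, rfl, Or.inl ⟨by omega, hmem, by omega⟩⟩
      rcases eq_or_ne a (b.1 - 1, b.2) with rfl | hane2
      · exact hlt
      · have := ih a (b.1 - 1, b.2) ha hmem (by omega) (by omega) (by omega) hane2
          (fun e he => hns e (le_trans he (le_of_lt hlt)))
        omega
    · -- same row, go left
      have hcol : a.2 < b.2 := by
        rcases Nat.lt_or_ge a.2 b.2 with h | h
        · exact h
        · exact absurd (Prod.ext_iff.2 ⟨by omega, by omega⟩) hne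
      have hb1 : 1 ≤ b.2 := by omega
      have hbu : ShC lam (b.1, b.2 - 1) := shC_left hb' hb1
      have hmem : (b.1, b.2 - 1) ∈ boxShape lam := shC_mem hbu
      have hne2 : (b.1, b.2 - 1) ≠ b := by
        intro h
        have := congrArg Prod.snd h
        simp only at this
        omega
      have hlt : f (b.1, b.2 - 1) < f b := by
        by_contra hge
        push_neg at hge
        have hneq : f (b.1, b.2 - 1) ≠ f b := fun h => hne2 (hinj hmem hb h)
        exact hns (f b) le_rfl ⟨b, hb, rfl, Or.inr ⟨by omega, hmem, by omega⟩⟩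
      rcases eq_or_ne a (b.1, b.2 - 1) with rfl | hane2
      · exact hlt
      · have := ih a (b.1, b.2 - 1) ha hmem (by omega) (by omega) (by omega) hane2
          (fun e he => hns e (le_trans he (le_of_lt hlt)))
        omega

end Aux



lemma mem_shorts {n : ℕ} {cells : Finset (ℕ × ℕ)} {f : ℕ × ℕ → ℕ} {e : ℕ} :
    e ∈ shorts n cells f ↔ e ∈ Finset.Icc 1 n ∧ IsShort cells f e := by
  unfold shorts
  exact Finset.mem_filter

/-- The invariant maintained through the `jdt` straightening process. -/
def INVP (n k : ℕ) (lam : YoungDiagram) (Q : ℕ × ℕ → ℕ) : Prop :=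
  IsFillingF n (boxShape lam) Q ∧ Q (boxCell lam) = k ∧
  RestrictedStd (boxShape lam) Q (Finset.Icc 1 (k - 1)) ∧
  RestrictedStd (boxShape lam) Q (Finset.Icc (k + 1) n)

lemma step_spec (n k : ℕ) (lam : YoungDiagram) (hk1 : 1 ≤ k) (hk2 : k < n)
    (Q : ℕ × ℕ → ℕ) (hQ : INVP n k lam Q)
    (hne : (shorts n (boxShape lam) Q).Nonempty) :
    ∃ i ∈ Finset.Icc 1 (k - 1), ∃ j ∈ Finset.Icc (k + 1) n,
      stepFun n (boxShape lam) Q = mapEntries (boxShape lam) (⇑(Equiv.swap i j)) Q ∧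
      stepFun n (boxShape lam) Q ≠ Q ∧
      INVP n k lam (stepFun n (boxShape lam) Q) := by
  obtain ⟨⟨hbij, hzero⟩, hbox, hM, hN⟩ := hQ
  have hinj : Set.InjOn Q ↑(boxShape lam) := hbij.injOn
  set i := (shorts n (boxShape lam) Q).min' hne with hi_def
  have hi_mem := (shorts n (boxShape lam) Q).min'_mem hne
  rw [← hi_def, mem_shorts] at hi_mem
  obtain ⟨hi_icc, hi_short⟩ := hi_mem
  rw [Finset.mem_Icc] at hi_icc
  obtain ⟨c₀, hc₀mem, hc₀val, hdisj⟩ := hi_short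
  have hc₀ : cellOf (boxShape lam) Q i = c₀ := by
    rw [← hc₀val]; exact cellOf_eq hinj hc₀mem
  -- minimality
  have hmin : ∀ e, e < i → ¬ IsShort (boxShape lam) Q e := by
    intro e he hsh
    have hicc : e ∈ Finset.Icc 1 n := by
      obtain ⟨c, hc, hval, _⟩ := hsh
      have := hbij.mapsTo hc
      rw [hval] at this
      exact Finset.mem_Icc.2 ⟨this.1, this.2⟩
    have := (shorts n (boxShape lam) Q).min'_le e (mem_shorts.2 ⟨hicc, hsh⟩)
    omega
  -- c₀ is not the disconnected box
  have hc₀box : c₀ ≠ boxCell lam := by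
    rintro rfl
    rcases hdisj with ⟨h1, _, _⟩ | ⟨h1, h2, _⟩
    · have : (boxCell lam).1 = 0 := rfl
      omega
    · have hb2 : (boxCell lam).2 = lam.rowLen 0 := rfl
      have hb1 : (boxCell lam).1 = 0 := rfl
      rcases mem_boxShape.1 h2 with h | h
      · have := congrArg Prod.snd h
        simp only at this
        omega
      · have := h.1
        simp only at this
        omega
  have hc₀sh : ShC lam c₀ := mem_shC hc₀mem hc₀box
  -- the two candidate neighbour values
  set av := (if 1 ≤ c₀.1 ∧ (c₀.1 - 1, c₀.2) ∈ boxShape lam then Q (c₀.1 - 1, c₀.2) else 0)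
    with hav_def
  set lv := (if 1 ≤ c₀.2 ∧ (c₀.1, c₀.2 - 1) ∈ boxShape lam then Q (c₀.1, c₀.2 - 1) else 0)
    with hlv_def
  set j := max av lv with hj_def
  have hup : ∀ (_ : 1 ≤ c₀.1) (_ : (c₀.1 - 1, c₀.2) ∈ boxShape lam),
      Q (c₀.1 - 1, c₀.2) ≤ j := by
    intro h1 h2
    have hQe : av = Q (c₀.1 - 1, c₀.2) := by rw [hav_def, if_pos ⟨h1, h2⟩]
    rw [hj_def, ← hQe]
    exact le_max_left _ _
  have hleft : ∀ (_ : 1 ≤ c₀.2) (_ : (c₀.1, c₀.2 - 1) ∈ boxShape lam),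
      Q (c₀.1, c₀.2 - 1) ≤ j := by
    intro h1 h2
    have hQe : lv = Q (c₀.1, c₀.2 - 1) := by rw [hlv_def, if_pos ⟨h1, h2⟩]
    rw [hj_def, ← hQe]
    exact le_max_right _ _
  have hji : i < j := by
    rcases hdisj with ⟨h1, h2, h3⟩ | ⟨h1, h2, h3⟩
    · exact lt_of_lt_of_le h3 (hup h1 h2)
    · exact lt_of_lt_of_le h3 (hleft h1 h2)
  -- the cell d holding j
  have hd : ∃ d, d ∈ boxShape lam ∧ d ≠ c₀ ∧ d.1 ≤ c₀.1 ∧ d.2 ≤ c₀.2 ∧ Q d = j := by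
    rcases le_total av lv with hle | hle
    · have hjlv : j = lv := by rw [hj_def]; exact max_eq_right hle
      by_cases hcond : 1 ≤ c₀.2 ∧ (c₀.1, c₀.2 - 1) ∈ boxShape lam
      · refine ⟨(c₀.1, c₀.2 - 1), hcond.2, ?_, le_rfl, by omega, ?_⟩
        · intro h
          have := congrArg Prod.snd h
          simp only at this
          have := hcond.1
          omega
        · rw [hjlv, hlv_def, if_pos hcond]
      · rw [hlv_def, if_neg hcond] at hjlv
        omega
    · have hjav : j = av := by rw [hj_def]; exact max_eq_left hle
      by_cases hcond : 1 ≤ c₀.1 ∧ (c₀.1 - 1, c₀.2) ∈ boxShape lam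
      · refine ⟨(c₀.1 - 1, c₀.2), hcond.2, ?_, by omega, le_rfl, ?_⟩
        · intro h
          have := congrArg Prod.fst h
          simp only at this
          have := hcond.1
          omega
        · rw [hjav, hav_def, if_pos hcond]
      · rw [hav_def, if_neg hcond] at hjav
        omega
  obtain ⟨d, hdmem, hdc₀, hd1, hd2, hdval⟩ := hd
  have hdbox : d ≠ boxCell lam := by
    intro h
    have hcl := shC_col_lt hc₀sh
    have : d.2 = lam.rowLen 0 := by rw [h]; rfl
    omega
  have hjn : 1 ≤ j ∧ j ≤ n := by
    have := hbij.mapsTo hdmem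
    rw [hdval] at this
    exact ⟨this.1, this.2⟩
  have hjk : j ≠ k := by
    intro h
    exact hdbox (hinj hdmem boxCell_mem (by rw [hdval, hbox, h]))
  have hik : i ≠ k := by
    intro h
    exact hc₀box (hinj hc₀mem boxCell_mem (by rw [hc₀val, hbox, h]))
  have hjM : ¬ j ≤ k - 1 := by
    intro h
    have := hM d hdmem c₀ hc₀mem
      (by rw [hdval]; exact Finset.mem_Icc.2 ⟨by omega, h⟩)
      (by rw [hc₀val]; exact Finset.mem_Icc.2 ⟨by omega, by omega⟩)
      hd1 hd2 hdc₀
    rw [hdval, hc₀val] at this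
    omega
  have hjN : k + 1 ≤ j := by omega
  have hiM : i ≤ k - 1 := by
    by_contra h
    have hiN : k + 1 ≤ i := by omega
    have := hN d hdmem c₀ hc₀mem
      (by rw [hdval]; exact Finset.mem_Icc.2 ⟨hjN, hjn.2⟩)
      (by rw [hc₀val]; exact Finset.mem_Icc.2 ⟨hiN, hi_icc.2⟩)
      hd1 hd2 hdc₀
    rw [hdval, hc₀val] at this
    omega
  -- the step is the swap of i and j
  have hstep : stepFun n (boxShape lam) Q
      = mapEntries (boxShape lam) (⇑(Equiv.swap i j)) Q := by
    unfold stepFun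
    rw [dif_pos hne]
    simp only [← hi_def, hc₀, ← hav_def, ← hlv_def, ← hj_def]
  set Q' := mapEntries (boxShape lam) (⇑(Equiv.swap i j)) Q with hQ'_def
  have hQ'val : ∀ c ∈ boxShape lam, Q' c = Equiv.swap i j (Q c) := by
    intro c hc
    rw [hQ'_def]
    unfold mapEntries
    rw [if_pos hc]
  have hQ'c₀ : Q' c₀ = j := by
    rw [hQ'val c₀ hc₀mem, hc₀val, Equiv.swap_apply_left]
  have hQ'd : Q' d = i := by
    rw [hQ'val d hdmem, hdval, Equiv.swap_apply_right]
  have hQother : ∀ c ∈ boxShape lam, c ≠ c₀ → c ≠ d → Q' c = Q c := by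
    intro c hc h1 h2
    rw [hQ'val c hc, Equiv.swap_apply_of_ne_of_ne]
    · intro h
      exact h1 (hinj hc hc₀mem (h.trans hc₀val.symm))
    · intro h
      exact h2 (hinj hc hdmem (h.trans hdval.symm))
  have hstep_ne : stepFun n (boxShape lam) Q ≠ Q := by
    rw [hstep]
    intro h
    have := congrFun h c₀
    rw [hQ'c₀, hc₀val] at this
    omega
  -- the new filling is a filling
  have hswapmt : Set.MapsTo (⇑(Equiv.swap i j)) (Set.Icc 1 n) (Set.Icc 1 n) := by
    intro x hx
    rcases eq_or_ne x i with rfl | hxi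
    · rw [Equiv.swap_apply_left]; exact ⟨hjn.1, hjn.2⟩
    rcases eq_or_ne x j with rfl | hxj
    · rw [Equiv.swap_apply_right]; exact ⟨hi_icc.1, hi_icc.2⟩
    · rw [Equiv.swap_apply_of_ne_of_ne hxi hxj]; exact hx
  have hswapbij : Set.BijOn (⇑(Equiv.swap i j)) (Set.Icc 1 n) (Set.Icc 1 n) := by
    refine ⟨hswapmt, (Equiv.injective _).injOn, ?_⟩
    intro x hx
    exact ⟨Equiv.swap i j x, hswapmt hx, Equiv.swap_apply_self i j x⟩
  have hQ'fill : IsFillingF n (boxShape lam) Q' := by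
    constructor
    · exact (hswapbij.comp hbij).congr fun c hc => (hQ'val c hc).symm
    · intro c hc
      rw [hQ'_def]
      unfold mapEntries
      rw [if_neg hc]
  have hQ'box : Q' (boxCell lam) = k := by
    rw [hQ'val _ boxCell_mem, hbox,
      Equiv.swap_apply_of_ne_of_ne (Ne.symm hik) (Ne.symm hjk)]
  -- restricted standardness on the moving entries
  have hQ'M : RestrictedStd (boxShape lam) Q' (Finset.Icc 1 (k - 1)) := by
    intro a ha b hb haM hbM h1 h2 hab
    rw [Finset.mem_Icc] at haM hbM
    have hac₀ : a ≠ c₀ := by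
      rintro rfl
      rw [hQ'c₀] at haM
      omega
    have hbc₀ : b ≠ c₀ := by
      rintro rfl
      rw [hQ'c₀] at hbM
      omega
    rcases eq_or_ne a d with heq | had
    · -- the entry i now sits at a = d
      have heqs : d = a := heq.symm
      subst heqs
      rcases eq_or_ne b d with heq2 | hbd
      · exact absurd heq2.symm hab
      have hQ'b : Q' b = Q b := hQother b hb hbc₀ hbd
      rw [hQ'd, hQ'b]
      by_contra hge
      push_neg at hge
      have hQbi : Q b ≠ i := by
        intro h
        exact hbc₀ (hinj hb hc₀mem (h.trans hc₀val.symm))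
      have hQblt : Q b < i := by omega
      have := nw_lt hinj (b.1 + b.2) d b hdmem hb le_rfl h1 h2 hab
        (fun e he => hmin e (by omega))
      rw [hdval] at this
      omega
    · have hQ'a : Q' a = Q a := hQother a ha hac₀ had
      rw [hQ'a] at haM ⊢
      rcases eq_or_ne b d with heq | hbd
      · have heqs : d = b := heq.symm
        subst heqs
        rw [hQ'd]
        have := hM a ha c₀ hc₀mem (Finset.mem_Icc.2 haM)
          (by rw [hc₀val]; exact Finset.mem_Icc.2 ⟨hi_icc.1, hiM⟩)
          (le_trans h1 hd1) (le_trans h2 hd2) hac₀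
        rw [hc₀val] at this
        exact this
      · have hQ'b : Q' b = Q b := hQother b hb hbc₀ hbd
        rw [hQ'b] at hbM ⊢
        exact hM a ha b hb (Finset.mem_Icc.2 haM) (Finset.mem_Icc.2 hbM) h1 h2 hab
  -- restricted standardness on the non-moving entries
  have hQ'N : RestrictedStd (boxShape lam) Q' (Finset.Icc (k + 1) n) := by
    intro a ha b hb haN hbN h1 h2 hab
    rw [Finset.mem_Icc] at haN hbN
    have had : a ≠ d := by
      rintro rfl
      rw [hQ'd] at haN
      omega
    have hbd : b ≠ d := by
      rintro rfl
      rw [hQ'd] at hbN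
      omega
    rcases eq_or_ne a c₀ with heq | hac₀
    · -- the entry j now sits at a = c₀
      have heqs : c₀ = a := heq.symm
      subst heqs
      have hbc₀ : b ≠ c₀ := Ne.symm hab
      have hQ'b : Q' b = Q b := hQother b hb hbc₀ hbd
      rw [hQ'c₀, hQ'b]
      have := hN d hdmem b hb
        (by rw [hdval]; exact Finset.mem_Icc.2 ⟨hjN, hjn.2⟩)
        (by rw [hQ'b] at hbN; exact Finset.mem_Icc.2 hbN)
        (le_trans hd1 h1) (le_trans hd2 h2) (Ne.symm hbd)
      rw [hdval] at this
      exact this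
    · have hQ'a : Q' a = Q a := hQother a ha hac₀ had
      rw [hQ'a] at haN ⊢
      rcases eq_or_ne b c₀ with heq | hbc₀
      · -- hard case
        have heqs : c₀ = b := heq.symm
        subst heqs
        rw [hQ'c₀]
        by_contra hge
        push_neg at hge
        have hQaj : Q a ≠ j := by
          intro h
          exact had (hinj ha hdmem (h.trans hdval.symm))
        have hgt : j < Q a := by omega
        have habox : a ≠ boxCell lam := by
          intro h
          have : Q a = k := by rw [h, hbox]
          omega
        have hash : ShC lam a := mem_shC ha habox
        by_cases hr : a.1 < c₀.1
        · -- compare through the cell just above c₀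
          have hc2 : 2 ≤ c₀.1 := by have := hash.1; omega
          have hesh : ShC lam (c₀.1 - 1, c₀.2) := shC_up hc₀sh hc2
          have hemem : (c₀.1 - 1, c₀.2) ∈ boxShape lam := shC_mem hesh
          have hv : Q (c₀.1 - 1, c₀.2) ≤ j := hup (by omega) hemem
          rcases eq_or_ne a (c₀.1 - 1, c₀.2) with rfl | hae
          · omega
          · have hvicc : 1 ≤ Q (c₀.1 - 1, c₀.2) ∧ Q (c₀.1 - 1, c₀.2) ≤ n := by
              have := hbij.mapsTo hemem
              exact ⟨this.1, this.2⟩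
            have hvk : Q (c₀.1 - 1, c₀.2) ≠ k := by
              intro h
              exact shC_ne_box hesh (hinj hemem boxCell_mem (by rw [h, hbox]))
            by_cases hvM : Q (c₀.1 - 1, c₀.2) ≤ k - 1
            · have hvi : Q (c₀.1 - 1, c₀.2) < i := by
                have := hM (c₀.1 - 1, c₀.2) hemem c₀ hc₀mem
                  (Finset.mem_Icc.2 ⟨hvicc.1, hvM⟩)
                  (by rw [hc₀val]; exact Finset.mem_Icc.2 ⟨hi_icc.1, hiM⟩)
                  (by show c₀.1 - 1 ≤ c₀.1; omega) le_rfl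
                  (by intro h; have := congrArg Prod.fst h; simp only at this; omega)
                rw [hc₀val] at this
                exact this
              have := nw_lt hinj (c₀.1 - 1 + c₀.2) a (c₀.1 - 1, c₀.2) ha hemem le_rfl
                (by show a.1 ≤ c₀.1 - 1; omega) (by show a.2 ≤ c₀.2; omega) hae
                (fun e he => hmin e (by omega))
              omega
            · have := hN a ha (c₀.1 - 1, c₀.2) hemem
                (Finset.mem_Icc.2 haN)
                (Finset.mem_Icc.2 ⟨by omega, hvicc.2⟩)
                (by show a.1 ≤ c₀.1 - 1; omega) (by show a.2 ≤ c₀.2; omega) hae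
              omega
        · -- same row: compare through the cell just left of c₀
          have har : a.1 = c₀.1 := by omega
          have hacol : a.2 < c₀.2 := by
            rcases Nat.lt_or_ge a.2 c₀.2 with h | h
            · exact h
            · exact absurd (Prod.ext_iff.2 ⟨by omega, by omega⟩) hac₀
          have hc2 : 1 ≤ c₀.2 := by omega
          have hesh : ShC lam (c₀.1, c₀.2 - 1) := shC_left hc₀sh hc2
          have hemem : (c₀.1, c₀.2 - 1) ∈ boxShape lam := shC_mem hesh
          have hv : Q (c₀.1, c₀.2 - 1) ≤ j := hleft hc2 hemem
          rcases eq_or_ne a (c₀.1, c₀.2 - 1) with rfl | hae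
          · omega
          · have hvicc : 1 ≤ Q (c₀.1, c₀.2 - 1) ∧ Q (c₀.1, c₀.2 - 1) ≤ n := by
              have := hbij.mapsTo hemem
              exact ⟨this.1, this.2⟩
            have hvk : Q (c₀.1, c₀.2 - 1) ≠ k := by
              intro h
              exact shC_ne_box hesh (hinj hemem boxCell_mem (by rw [h, hbox]))
            by_cases hvM : Q (c₀.1, c₀.2 - 1) ≤ k - 1
            · have hvi : Q (c₀.1, c₀.2 - 1) < i := by
                have := hM (c₀.1, c₀.2 - 1) hemem c₀ hc₀mem
                  (Finset.mem_Icc.2 ⟨hvicc.1, hvM⟩)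
                  (by rw [hc₀val]; exact Finset.mem_Icc.2 ⟨hi_icc.1, hiM⟩)
                  le_rfl (by show c₀.2 - 1 ≤ c₀.2; omega)
                  (by intro h; have := congrArg Prod.snd h; simp only at this; omega)
                rw [hc₀val] at this
                exact this
              have := nw_lt hinj (c₀.1 + (c₀.2 - 1)) a (c₀.1, c₀.2 - 1) ha hemem le_rfl
                (by show a.1 ≤ c₀.1; omega) (by show a.2 ≤ c₀.2 - 1; omega) hae
                (fun e he => hmin e (by omega))
              omega
            · have := hN a ha (c₀.1, c₀.2 - 1) hemem
                (Finset.mem_Icc.2 haN)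
                (Finset.mem_Icc.2 ⟨by omega, hvicc.2⟩)
                (by show a.1 ≤ c₀.1; omega) (by show a.2 ≤ c₀.2 - 1; omega) hae
              omega
      · have hQ'b : Q' b = Q b := hQother b hb hbc₀ hbd
        rw [hQ'b] at hbN ⊢
        exact hN a ha b hb (Finset.mem_Icc.2 haN) (Finset.mem_Icc.2 hbN) h1 h2 hab
  refine ⟨i, Finset.mem_Icc.2 ⟨hi_icc.1, hiM⟩, j, Finset.mem_Icc.2 ⟨hjN, hjn.2⟩,
    hstep, hstep_ne, ?_⟩
  rw [hstep]
  exact ⟨hQ'fill, hQ'box, hQ'M, hQ'N⟩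


lemma std_of_no_shorts {n : ℕ} {lam : YoungDiagram} {Q : ℕ × ℕ → ℕ}
    (hinj : Set.InjOn Q ↑(boxShape lam))
    (hns : ∀ e, ¬ IsShort (boxShape lam) Q e) : IsStandardF (boxShape lam) Q := by
  constructor
  · intro a ha b hb hr hc
    exact nw_lt hinj (b.1 + b.2) a b ha hb le_rfl (by omega) (by omega)
      (by intro h; rw [h] at hc; omega) (fun e _ => hns e)
  · intro a ha b hb hc hr
    exact nw_lt hinj (b.1 + b.2) a b ha hb le_rfl (by omega) (by omega)
      (by intro h; rw [h] at hr; omega) (fun e _ => hns e)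

lemma shorts_nonempty_of_not_std {n : ℕ} {lam : YoungDiagram} {Q : ℕ × ℕ → ℕ}
    (hfill : IsFillingF n (boxShape lam) Q)
    (h : ¬ IsStandardF (boxShape lam) Q) :
    (shorts n (boxShape lam) Q).Nonempty := by
  rw [Finset.nonempty_iff_ne_empty]
  intro hemp
  apply h
  apply std_of_no_shorts (n := n) hfill.1.injOn
  intro e hsh
  have hicc : e ∈ Finset.Icc 1 n := by
    obtain ⟨c, hc, hval, _⟩ := hsh
    have := hfill.1.mapsTo hc
    rw [hval] at this
    exact Finset.mem_Icc.2 ⟨this.1, this.2⟩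
  have hmem : e ∈ shorts n (boxShape lam) Q := mem_shorts.2 ⟨hicc, hsh⟩
  rw [hemp] at hmem
  exact absurd hmem (Finset.notMem_empty e)

lemma rotval_rotval (n k e : ℕ) (h1 : 1 ≤ e) (h2 : e ≤ n) (hk : k ≤ n) :
    rotval n (n - k) (rotval n k e) = e := by
  unfold rotval
  have hn : 0 < n := by omega
  have h3 : e + k - 1 = (e - 1) + k := by omega
  rw [h3]
  have h4 : (e - 1 + k) % n + 1 + (n - k) - 1 = (e - 1 + k) % n + (n - k) := by omega
  rw [h4, Nat.mod_add_mod]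
  have h5 : e - 1 + k + (n - k) = (e - 1) + n := by omega
  rw [h5, Nat.add_mod_right, Nat.mod_eq_of_lt (by omega)]
  omega

lemma rotval_bijOn (n k : ℕ) (hn : 0 < n) (hk : k ≤ n) :
    Set.BijOn (rotval n k) (Set.Icc 1 n) (Set.Icc 1 n) := by
  have hmt : ∀ m, Set.MapsTo (rotval n m) (Set.Icc 1 n) (Set.Icc 1 n) := by
    intro m e he
    unfold rotval
    exact ⟨by omega, by have := Nat.mod_lt (e + m - 1) hn; omega⟩
  have hinv : Set.InvOn (rotval n (n - k)) (rotval n k) (Set.Icc 1 n) (Set.Icc 1 n) := by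
    constructor
    · intro e he
      exact rotval_rotval n k e he.1 he.2 hk
    · intro e he
      have := rotval_rotval n (n - k) e he.1 he.2 (by omega)
      rwa [Nat.sub_sub_self hk] at this
  exact Set.InvOn.bijOn hinv (hmt k) (hmt (n - k))

lemma base_INVP (n k : ℕ) (lam : YoungDiagram) (hk1 : 1 ≤ k) (hk2 : k < n)
    (T : ℕ × ℕ → ℕ) (hT : IsFillingF n (boxShape lam) T)
    (hstd : IsStandardF (boxShape lam) T) (hdelta : deltaOf lam T = n) :
    INVP n k lam (mapEntries (boxShape lam) (rotval n k) T) := by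
  obtain ⟨hTbij, hTzero⟩ := hT
  have hinj := hTbij.injOn
  set Q := mapEntries (boxShape lam) (rotval n k) T with hQ_def
  have hQval : ∀ c ∈ boxShape lam, Q c = rotval n k (T c) := by
    intro c hc
    rw [hQ_def]
    unfold mapEntries
    rw [if_pos hc]
  have hn : 0 < n := by omega
  have hTns : ∀ e, ¬ IsShort (boxShape lam) T e := std_no_short hstd
  refine ⟨⟨?_, ?_⟩, ?_, ?_, ?_⟩
  · exact ((rotval_bijOn n k hn (by omega)).comp hTbij).congr fun c hc => (hQval c hc).symm
  · intro c hc
    rw [hQ_def]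
    unfold mapEntries
    rw [if_neg hc]
  · rw [hQval _ boxCell_mem]
    have hTb : T (boxCell lam) = n := hdelta
    rw [hTb]
    unfold rotval
    have h5 : n + k - 1 = (k - 1) + n := by omega
    rw [h5, Nat.add_mod_right, Nat.mod_eq_of_lt (by omega)]
    omega
  · intro a ha b hb haM hbM h1 h2 hab
    rw [Finset.mem_Icc] at haM hbM
    have key : ∀ c ∈ boxShape lam, 1 ≤ Q c → Q c ≤ k - 1 →
        n - k + 1 ≤ T c ∧ T c ≤ n - 1 ∧ Q c = T c + k - n := by
      intro c hc hq1 hq2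
      have hTc := hTbij.mapsTo hc
      have hTc1 : 1 ≤ T c := hTc.1
      have hTc2 : T c ≤ n := hTc.2
      have hqv : Q c = (T c + k - 1) % n + 1 := hQval c hc
      by_cases hcase : T c ≤ n - k
      · exfalso
        rw [Nat.mod_eq_of_lt (by omega)] at hqv
        omega
      · have h5 : T c + k - 1 = (T c + k - 1 - n) + n := by omega
        rw [h5, Nat.add_mod_right, Nat.mod_eq_of_lt (by omega)] at hqv
        exact ⟨by omega, by omega, by omega⟩
    obtain ⟨ha1, ha2, ha3⟩ := key a ha haM.1 haM.2
    obtain ⟨hb1, hb2, hb3⟩ := key b hb hbM.1 hbM.2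
    have hTab : T a < T b :=
      nw_lt hinj (b.1 + b.2) a b ha hb le_rfl h1 h2 hab (fun e _ => hTns e)
    omega
  · intro a ha b hb haN hbN h1 h2 hab
    rw [Finset.mem_Icc] at haN hbN
    have key : ∀ c ∈ boxShape lam, k + 1 ≤ Q c → Q c ≤ n →
        T c ≤ n - k ∧ Q c = T c + k := by
      intro c hc hq1 hq2
      have hTc := hTbij.mapsTo hc
      have hTc1 : 1 ≤ T c := hTc.1
      have hTc2 : T c ≤ n := hTc.2
      have hqv : Q c = (T c + k - 1) % n + 1 := hQval c hc
      by_cases hcase : T c ≤ n - k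
      · rw [Nat.mod_eq_of_lt (by omega)] at hqv
        exact ⟨hcase, by omega⟩
      · exfalso
        have h5 : T c + k - 1 = (T c + k - 1 - n) + n := by omega
        rw [h5, Nat.add_mod_right, Nat.mod_eq_of_lt (by omega)] at hqv
        omega
    obtain ⟨ha1, ha2⟩ := key a ha haN.1 haN.2
    obtain ⟨hb1, hb2⟩ := key b hb hbN.1 hbN.2
    have hTab : T a < T b :=
      nw_lt hinj (b.1 + b.2) a b ha hb le_rfl h1 h2 hab (fun e _ => hTns e)
    omega

lemma stepFun_of_empty {n : ℕ} {cells : Finset (ℕ × ℕ)} {f : ℕ × ℕ → ℕ}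
    (h : ¬ (shorts n cells f).Nonempty) : stepFun n cells f = f := by
  unfold stepFun
  rw [dif_neg h]

lemma iter_INVP (n k : ℕ) (lam : YoungDiagram) (hk1 : 1 ≤ k) (hk2 : k < n)
    (Q₀ : ℕ × ℕ → ℕ) (h0 : INVP n k lam Q₀) (m : ℕ) :
    INVP n k lam ((stepFun n (boxShape lam))^[m] Q₀) := by
  induction m with
  | zero => exact h0
  | succ m ih =>
    rw [Function.iterate_succ_apply']
    by_cases h : (shorts n (boxShape lam) ((stepFun n (boxShape lam))^[m] Q₀)).Nonempty
    · obtain ⟨i, _, j, _, _, _, hinv⟩ := step_spec n k lam hk1 hk2 _ ih h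
      exact hinv
    · rw [stepFun_of_empty h]
      exact ih

/-- Lemma 4.2. Let `λ ⊢ n-1`, `1 ≤ k < n`, and `T ∈ SYT(λ^□)` with
`δ(T) = n`. Let `Q` be any tableau obtained at an intermediate step of the `jdt`
straightening process applied to `k+T`. Then `Q` restricted to the moving entries
`1,…,k-1` is standard, `Q` restricted to the non-moving entries `k+1,…,n` is standard,
and if `Q` is not yet standard then the elementary step applied to `Q` swaps one moving
entry with one non-moving entry. -/
theorem jdt_intermediate_standard (n : ℕ) (lam : YoungDiagram)
    (hlam : lam.cells.card = n - 1)
    (k : ℕ) (hk1 : 1 ≤ k) (hk2 : k < n)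
    (T : ℕ × ℕ → ℕ) (hT : IsFillingF n (boxShape lam) T)
    (hstd : IsStandardF (boxShape lam) T) (hdelta : deltaOf lam T = n)
    (m : ℕ) (Q : ℕ × ℕ → ℕ)
    (hQ : Q = (stepFun n (boxShape lam))^[m] (mapEntries (boxShape lam) (rotval n k) T)) :
    RestrictedStd (boxShape lam) Q (Finset.Icc 1 (k - 1)) ∧
    RestrictedStd (boxShape lam) Q (Finset.Icc (k + 1) n) ∧
    (¬ IsStandardF (boxShape lam) Q →
      ∃ i ∈ Finset.Icc 1 (k - 1), ∃ j ∈ Finset.Icc (k + 1) n,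
        stepFun n (boxShape lam) Q = mapEntries (boxShape lam) (⇑(Equiv.swap i j)) Q ∧
        stepFun n (boxShape lam) Q ≠ Q) := by
  subst hQ
  have hinv := iter_INVP n k lam hk1 hk2 _ (base_INVP n k lam hk1 hk2 T hT hstd hdelta) m
  refine ⟨hinv.2.2.1, hinv.2.2.2, ?_⟩
  intro hnstd
  have hne := shorts_nonempty_of_not_std hinv.1 hnstd
  obtain ⟨i, hi, j, hj, heq, hneQ, _⟩ := step_spec n k lam hk1 hk2 _ hinv hne
  exact ⟨i, hi, j, hj, heq, hneQ⟩

end SchurRot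
end
end
end
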